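/- arXiv:1604.07039 — 2 statements merged into one kernel-verified Lean document; each statement's English description precedes it below -/
import Mathlib

section
/- Let X^n ⊂ ℝ^d (d ≥ 2). For every x ∉ M(X^n) and every z ∈ M(X^n), there exists a unit vector u ∈ U_x with u·x < u·z; that is, U_x ∩ H_{x,z} ≠ ∅. -/
open scoped RealInnerProductSpace
open MeasureTheory

noncomputable section

/-- `E d` is the Euclidean space `ℝ^d`. -/
abbrev E (d : ℕ) : Type := EuclideanSpace ℝ (Fin d)

/-- A sample `X` of `n` points in `ℝ^d` is in general position if no affine hyperplane
(encoded as `{x | ⟪v, x⟫ = c}` for some `v ≠ 0`) contains more than `d` of the points. -/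
def inGeneralPosition {d n : ℕ} (X : Fin n → E d) : Prop :=
  ∀ v : E d, v ≠ 0 → ∀ c : ℝ, ({i : Fin n | ⟪v, X i⟫ = c} : Set (Fin n)).ncard ≤ d

/-- Number of sample points in the closed halfspace `{z | ⟪u, z⟫ ≤ ⟪u, x⟫}`. -/
def sideCount {d n : ℕ} (X : Fin n → E d) (u x : E d) : ℕ :=
  ({i : Fin n | ⟪u, X i⟫ ≤ ⟪u, x⟫} : Set (Fin n)).ncard

/-- Tukey's halfspace depth of `x` with respect to the sample `X`. -/
def depth {d n : ℕ} (X : Fin n → E d) (x : E d) : ℝ :=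
  sInf {r : ℝ | ∃ u : E d, ‖u‖ = 1 ∧ r = (sideCount X u x : ℝ) / (n : ℝ)}

/-- The maximum Tukey depth `λ*` of the sample `X`. -/
def maxDepth {d n : ℕ} (X : Fin n → E d) : ℝ :=
  sSup (Set.range (depth X))

/-- The set `M(X)` of deepest points. -/
def MSet {d n : ℕ} (X : Fin n → E d) : Set (E d) :=
  {x | depth X x = maxDepth X}

/-- `U_x`: the set of optimal (unit) directions realizing the depth at `x`. -/
def USet {d n : ℕ} (X : Fin n → E d) (x : E d) : Set (E d) :=
  {u | ‖u‖ = 1 ∧ (sideCount X u x : ℝ) / (n : ℝ) = depth X x}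

/-- `H_{x,y}`: the open hemisphere of unit directions `u` with `⟪u, x⟫ < ⟪u, y⟫`. -/
def HSet {d : ℕ} (x y : E d) : Set (E d) :=
  {u | ‖u‖ = 1 ∧ ⟪u, x⟫ < ⟪u, y⟫}

/-- `B_z`. -/
def BSet {d n : ℕ} (X : Fin n → E d) (z : E d) : Set (E d) :=
  {x | x ∈ MSet X ∧ USet X x ∩ HSet x z = ∅}

/-- `B̃_z = B_z \ {z}`. -/
def BTilde {d n : ℕ} (X : Fin n → E d) (z : E d) : Set (E d) :=
  BSet X z \ {z}

/-- `v` is a unit vector normal to an affine hyperplane spanned by `d` of the sample points. -/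
def normalToSampleHyperplane {d n : ℕ} (X : Fin n → E d) (v : E d) : Prop :=
  ‖v‖ = 1 ∧ ∃ (s : Finset (Fin n)) (c : ℝ), s.card = d ∧
    (affineSpan ℝ (X '' (s : Set (Fin n))) : Set (E d)) = {x : E d | ⟪v, x⟫ = c}

/-- Condition (2.1) on a unit direction `u`. -/
def cond21 {d n : ℕ} (X : Fin n → E d) (u : E d) : Prop :=
  ∀ v : E d, normalToSampleHyperplane X v → ⟪u, v⟫ ≠ 0

/-- `A` represents the columns of a `d × (d-1)` matrix which together with the unit
vector `u` form an orthonormal basis of `ℝ^d`. -/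
def IsAu {d : ℕ} (u : E d) (A : Fin (d - 1) → E d) : Prop :=
  ‖u‖ = 1 ∧ Orthonormal ℝ A ∧ ∀ j, ⟪A j, u⟫ = 0

/-- The `A_u`-projection `A_u^T x ∈ ℝ^{d-1}` of a point `x ∈ ℝ^d`. -/
def proj {d : ℕ} (A : Fin (d - 1) → E d) (x : E d) : E (d - 1) :=
  (WithLp.equiv 2 (Fin (d - 1) → ℝ)).symm (fun j => ⟪A j, x⟫)

/-- The embedding `A_u x = ∑ j x_j A_j ∈ ℝ^d` of a point `x ∈ ℝ^{d-1}`. -/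
def embed {d : ℕ} (A : Fin (d - 1) → E d) (x : E (d - 1)) : E d :=
  ∑ j, x j • A j

/-- `λ₀ = inf_{u ∈ S^{d-1}} λ*(X_u^n)`, the infimum over all directions of the maximum
Tukey depth of the projected sample. -/
def lambda0 {d n : ℕ} (X : Fin n → E d) : ℝ :=
  sInf {r : ℝ | ∃ (u : E d) (A : Fin (d - 1) → E d),
    IsAu u A ∧ r = maxDepth (fun i => proj A (X i))}

/-- The average (barycenter) of a set `K ⊆ ℝ^d`, taken with respect to the Hausdorff
measure of dimension equal to the affine dimension of `K`. -/
def setAverage {d : ℕ} (K : Set (E d)) : E d :=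
  (μH[(Module.finrank ℝ (affineSpan ℝ K).direction : ℝ)] K).toReal⁻¹ •
    ∫ x in K, x ∂(μH[(Module.finrank ℝ (affineSpan ℝ K).direction : ℝ)])

/-- Tukey's halfspace median: the average of all deepest points. -/
def TukeyMedian {d n : ℕ} (X : Fin n → E d) : E d :=
  setAverage (MSet X)

/-- `m` contaminating points suffice to break down the Tukey median at `X`. -/
def breaksDown {d n : ℕ} (X : Fin n → E d) (m : ℕ) : Prop :=
  ∀ C : ℝ, ∃ Y : Fin m → E d, C < ‖TukeyMedian (Fin.append X Y) - TukeyMedian X‖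

/-- The finite sample (additional) breakdown point of the Tukey median at `X`. -/
def FSBP {d n : ℕ} (X : Fin n → E d) : ℝ :=
  sInf {r : ℝ | ∃ m : ℕ, 1 ≤ m ∧ breaksDown X m ∧ r = (m : ℝ) / ((n : ℝ) + (m : ℝ))}

lemma sideCount_le_n {d n : ℕ} (X : Fin n → E d) (u x : E d) : sideCount X u x ≤ n := by
  unfold sideCount
  calc ({i : Fin n | ⟪u, X i⟫ ≤ ⟪u, x⟫} : Set (Fin n)).ncard
      ≤ (Set.univ : Set (Fin n)).ncard :=
        Set.ncard_le_ncard (Set.subset_univ _) Set.finite_univ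
    _ = n := by simp [Set.ncard_univ]

lemma depth_set_finite {d n : ℕ} (X : Fin n → E d) (x : E d) :
    {r : ℝ | ∃ u : E d, ‖u‖ = 1 ∧ r = (sideCount X u x : ℝ) / (n : ℝ)}.Finite := by
  apply Set.Finite.subset (Set.Finite.image (fun k : ℕ => (k : ℝ) / n) (Set.finite_Iic n))
  rintro r ⟨u, hu, rfl⟩
  exact ⟨sideCount X u x, by simpa [Set.mem_Iic] using sideCount_le_n X u x, rfl⟩

lemma depth_set_bddBelow {d n : ℕ} (X : Fin n → E d) (x : E d) :
    BddBelow {r : ℝ | ∃ u : E d, ‖u‖ = 1 ∧ r = (sideCount X u x : ℝ) / (n : ℝ)} := by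
  refine ⟨0, ?_⟩
  rintro r ⟨u, hu, rfl⟩
  positivity

lemma exists_unit_vector {d : ℕ} (hd : 0 < d) : ∃ u : E d, ‖u‖ = 1 :=
  ⟨EuclideanSpace.single ⟨0, hd⟩ (1 : ℝ), by simp⟩

lemma ratio_le_one {d n : ℕ} (X : Fin n → E d) (u x : E d) :
    (sideCount X u x : ℝ) / (n : ℝ) ≤ 1 := by
  rcases Nat.eq_zero_or_pos n with h | h
  · simp [h]
  · rw [div_le_one (by exact_mod_cast h)]
    exact_mod_cast sideCount_le_n X u x

lemma depth_le_one {d : ℕ} {n : ℕ} (hd : 0 < d) (X : Fin n → E d) (x : E d) :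
    depth X x ≤ 1 := by
  obtain ⟨u, hu⟩ := exists_unit_vector (d := d) hd
  exact csInf_le_of_le (depth_set_bddBelow X x) ⟨u, hu, rfl⟩ (ratio_le_one X u x)

/-- For every `x ∉ M(X)` and every `z ∈ M(X)` there is an optimal direction
`u ∈ U_x` with `⟪u, x⟫ < ⟪u, z⟫`, i.e. `U_x ∩ H_{x,z} ≠ ∅`. -/
theorem USet_inter_HSet_nonempty_of_not_mem_MSet {d n : ℕ} (hd : 2 ≤ d)
    (X : Fin n → E d) :
    ∀ x ∉ MSet X, ∀ z ∈ MSet X, (USet X x ∩ HSet x z).Nonempty := by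
  intro x hx z hz
  by_contra hne
  rw [Set.not_nonempty_iff_eq_empty] at hne
  have hd0 : 0 < d := by omega
  obtain ⟨u0, hu0⟩ := exists_unit_vector (d := d) hd0
  -- depth X x is attained by some unit vector u
  have hmem : depth X x ∈
      {r : ℝ | ∃ u : E d, ‖u‖ = 1 ∧ r = (sideCount X u x : ℝ) / (n : ℝ)} :=
    Set.Nonempty.csInf_mem ⟨_, u0, hu0, rfl⟩ (depth_set_finite X x)
  obtain ⟨u, hu, hux⟩ := hmem
  have huU : u ∈ USet X x := ⟨hu, hux.symm⟩
  have hle : ⟪u, z⟫ ≤ ⟪u, x⟫ := by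
    by_contra h
    push_neg at h
    have : u ∈ USet X x ∩ HSet x z := ⟨huU, hu, h⟩
    rw [hne] at this
    exact this
  have hcount : sideCount X u z ≤ sideCount X u x := by
    apply Set.ncard_le_ncard _ (Set.toFinite _)
    intro i hi
    exact le_trans hi hle
  have hz_le : depth X z ≤ (sideCount X u z : ℝ) / n :=
    csInf_le (depth_set_bddBelow X z) ⟨u, hu, rfl⟩
  have hzx : depth X z ≤ depth X x := by
    refine hz_le.trans ?_
    rw [hux, div_eq_mul_inv, div_eq_mul_inv]
    apply mul_le_mul_of_nonneg_right _ (by positivity)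
    exact_mod_cast hcount
  have hbdd : BddAbove (Set.range (depth X)) := by
    refine ⟨1, ?_⟩
    rintro r ⟨y, rfl⟩
    exact depth_le_one hd0 X y
  have hx_le : depth X x ≤ maxDepth X := le_csSup hbdd ⟨x, rfl⟩
  have hx_ne : depth X x ≠ maxDepth X := hx
  have hz_eq : depth X z = maxDepth X := hz
  have : depth X x < depth X z := by
    rw [hz_eq]
    exact lt_of_le_of_ne hx_le hx_ne
  linarith
end
end

section
/- (Lemma 4) Suppose X^n ⊂ ℝ^d (d ≥ 2) is in general position. Then there exists u_0 ∈ S^{d−1} such that (s1) u_0 satisfies condition (2.1), and (s2) λ*(X_{u_0}^n) = inf over u ∈ S^{d−1} of λ*(X_u^n); that is, the infimum over all directions of the maximum Tukey depth of the projected sample is attained at a direction satisfying condition (2.1). -/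
open scoped RealInnerProductSpace
open MeasureTheory

noncomputable section

section Aux
variable {d n : ℕ}

lemma sideCount_le (X : Fin n → E d) (v y : E d) : sideCount X v y ≤ n := by
  unfold sideCount
  have := Set.ncard_le_ncard (Set.subset_univ {i : Fin n | ⟪v, X i⟫ ≤ ⟪v, y⟫}) Set.finite_univ
  simpa [Set.ncard_univ] using this

/-- finite set of possible depth values -/
def valSet (n : ℕ) : Set ℝ := (fun m : ℕ => (m : ℝ) / n) '' (Set.Iic n)

lemma valSet_finite (n : ℕ) : (valSet n).Finite := (Set.finite_Iic n).image _

lemma valSet_nonneg {n : ℕ} {r : ℝ} (hr : r ∈ valSet n) : 0 ≤ r := by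
  obtain ⟨m, -, rfl⟩ := hr
  positivity

/-- Depth of `y` among directions orthogonal to `u`. -/
def DepU (X : Fin n → E d) (u y : E d) : ℝ :=
  sInf {r : ℝ | ∃ v : E d, ‖v‖ = 1 ∧ ⟪v, u⟫ = 0 ∧ r = (sideCount X v y : ℝ) / (n : ℝ)}

def gU (X : Fin n → E d) (u : E d) : ℝ := sSup {r : ℝ | ∃ y : E d, r = DepU X u y}

lemma finrank_perp {u : E d} (hu : u ≠ 0) :
    Module.finrank ℝ ((ℝ ∙ u)ᗮ : Submodule ℝ (E d)) = d - 1 := by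
  have h1 : Module.finrank ℝ (ℝ ∙ u : Submodule ℝ (E d)) = 1 := finrank_span_singleton hu
  have h2 := Submodule.finrank_add_finrank_orthogonal (𝕜 := ℝ) (ℝ ∙ u)
  rw [h1, finrank_euclideanSpace_fin] at h2
  omega

lemma exists_Au {u : E d} (hu : ‖u‖ = 1) : ∃ A : Fin (d - 1) → E d, IsAu u A := by
  have hu0 : u ≠ 0 := by intro h; rw [h, norm_zero] at hu; norm_num at hu
  set K := ((ℝ ∙ u)ᗮ : Submodule ℝ (E d)) with hK
  have hdim : Module.finrank ℝ K = d - 1 := finrank_perp hu0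
  let b := stdOrthonormalBasis ℝ K
  let e : Fin (d - 1) ≃ Fin (Module.finrank ℝ K) := finCongr hdim.symm
  refine ⟨fun j => (b (e j) : E d), hu, ?_, ?_⟩
  · have hb := b.orthonormal
    rw [orthonormal_iff_ite] at hb ⊢
    intro i j
    have := hb (e i) (e j)
    rw [Submodule.coe_inner] at this
    simpa [e.injective.eq_iff] using this
  · intro j
    have hmem : (b (e j) : E d) ∈ (ℝ ∙ u)ᗮ := (b (e j)).2
    exact (Submodule.mem_orthogonal' (ℝ ∙ u) _).mp hmem u (Submodule.mem_span_singleton_self u)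

lemma inner_embed (A : Fin (d - 1) → E d) (w : E (d - 1)) (z : E d) :
    ⟪embed A w, z⟫ = ⟪w, proj A z⟫ := by
  simp [embed, proj, sum_inner, real_inner_smul_left, PiLp.inner_apply,
    WithLp.equiv_symm_apply, PiLp.toLp_apply, RCLike.inner_apply, Finset.mul_sum, mul_assoc,
    Finset.sum_mul, mul_comm, mul_left_comm]

lemma inner_A_embed (hA : Orthonormal ℝ A) (j : Fin (d - 1)) (x : E (d - 1)) :
    ⟪A j, embed A x⟫ = x j := by
  unfold embed
  rw [hA.inner_right_fintype]

lemma proj_embed (hA : Orthonormal ℝ A) (x : E (d - 1)) : proj A (embed A x) = x := by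
  ext j
  simp only [proj, WithLp.equiv_symm_apply, PiLp.toLp_apply]
  rw [inner_A_embed hA]

lemma embed_inner_embed (hA : Orthonormal ℝ A) (w x : E (d - 1)) :
    ⟪embed A w, embed A x⟫ = ⟪w, x⟫ := by
  rw [inner_embed, proj_embed hA]

lemma norm_embed (hA : Orthonormal ℝ A) (w : E (d - 1)) : ‖embed A w‖ = ‖w‖ := by
  have h1 := real_inner_self_eq_norm_sq (embed A w)
  rw [embed_inner_embed hA, real_inner_self_eq_norm_sq] at h1
  nlinarith [norm_nonneg (embed A w), norm_nonneg w]

lemma embed_proj_of_perp (hA : IsAu u A) {v : E d} (hv : ⟪v, u⟫ = 0) :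
    embed A (proj A v) = v := by
  obtain ⟨hu, hAo, hAu⟩ := hA
  have hu0 : u ≠ 0 := by intro h; rw [h, norm_zero] at hu; norm_num at hu
  set V : Submodule ℝ (E d) := Submodule.span ℝ (Set.range A) with hV
  have hle : V ≤ (ℝ ∙ u)ᗮ := by
    rw [Submodule.span_le]
    rintro _ ⟨j, rfl⟩
    rw [SetLike.mem_coe, Submodule.mem_orthogonal]
    intro w hw
    obtain ⟨c, rfl⟩ := Submodule.mem_span_singleton.mp hw
    rw [real_inner_smul_left, real_inner_comm, hAu j, mul_zero]
  have hfr : Module.finrank ℝ V = d - 1 := by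
    rw [hV, finrank_span_eq_card hAo.linearIndependent, Fintype.card_fin]
  have hVeq : V = (ℝ ∙ u)ᗮ :=
    Submodule.eq_of_le_of_finrank_le hle (by rw [hfr, finrank_perp hu0])
  have hvV : v ∈ V := by
    rw [hVeq, Submodule.mem_orthogonal]
    intro w hw
    obtain ⟨c, rfl⟩ := Submodule.mem_span_singleton.mp hw
    rw [real_inner_smul_left, real_inner_comm, hv, mul_zero]
  -- span induction
  refine Submodule.span_induction ?_ ?_ ?_ ?_ hvV
  · rintro _ ⟨j, rfl⟩
    have hp : proj A (A j) = EuclideanSpace.single j 1 := by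
      ext k
      simp only [proj, WithLp.equiv_symm_apply, PiLp.toLp_apply]
      rw [orthonormal_iff_ite.mp hAo k j]
      simp [EuclideanSpace.single_apply, eq_comm]
    rw [hp]
    simp [embed, EuclideanSpace.single_apply]
  · simp [proj, embed]
  · intro x y _ _ hx hy
    have hpadd : proj A (x + y) = proj A x + proj A y := by
      ext k; simp [proj, WithLp.equiv_symm_apply, PiLp.toLp_apply, inner_add_right]
    rw [hpadd]
    have : embed A (proj A x + proj A y) = embed A (proj A x) + embed A (proj A y) := by
      simp [embed, add_smul, Finset.sum_add_distrib]
    rw [this, hx, hy]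
  · intro c x _ hx
    have hpsmul : proj A (c • x) = c • proj A x := by
      ext k
      simp [proj, WithLp.equiv_symm_apply, PiLp.toLp_apply, real_inner_smul_right, Finset.mul_sum,
        mul_left_comm]
    rw [hpsmul]
    have : embed A (c • proj A x) = c • embed A (proj A x) := by
      simp [embed, smul_smul, Finset.smul_sum]
    rw [this, hx]

lemma embed_perp_u (hA : IsAu u A) (w : E (d - 1)) : ⟪embed A w, u⟫ = 0 := by
  unfold embed
  rw [sum_inner]
  apply Finset.sum_eq_zero
  intro j _
  rw [real_inner_smul_left, hA.2.2 j, mul_zero]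

lemma sideCount_proj_eq (X : Fin n → E d) (hA : Orthonormal ℝ A) (w x : E (d - 1)) :
    sideCount (fun i => proj A (X i)) w x = sideCount X (embed A w) (embed A x) := by
  unfold sideCount
  congr 1
  ext i
  simp only [Set.mem_setOf_eq]
  rw [inner_embed A w (X i), inner_embed A w (embed A x), proj_embed hA]

lemma depth_proj_eq (X : Fin n → E d) (hA : IsAu u A) (x : E (d - 1)) :
    depth (fun i => proj A (X i)) x = DepU X u (embed A x) := by
  unfold depth DepU
  congr 1
  ext r
  constructor
  · rintro ⟨w, hw, rfl⟩
    exact ⟨embed A w, by rw [norm_embed hA.2.1, hw], embed_perp_u hA w,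
      by rw [sideCount_proj_eq X hA.2.1 w x]⟩
  · rintro ⟨v, hv, hvu, rfl⟩
    refine ⟨proj A v, ?_, ?_⟩
    · have h2 := norm_embed hA.2.1 (proj A v)
      rw [embed_proj_of_perp hA hvu] at h2
      rw [← h2, hv]
    · rw [sideCount_proj_eq X hA.2.1 _ x, embed_proj_of_perp hA hvu]

lemma DepU_proj_y (X : Fin n → E d) (hA : IsAu u A) (y : E d) :
    DepU X u y = DepU X u (embed A (proj A y)) := by
  have key : ∀ v : E d, ⟪v, u⟫ = 0 → ⟪v, embed A (proj A y)⟫ = ⟪v, y⟫ := by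
    intro v hv
    conv_lhs => rw [← embed_proj_of_perp hA hv]
    rw [embed_inner_embed hA.2.1, ← inner_embed, embed_proj_of_perp hA hv]
  have hsc : ∀ v : E d, ⟪v, u⟫ = 0 →
      sideCount X v y = sideCount X v (embed A (proj A y)) := by
    intro v hvu
    unfold sideCount
    congr 1
    ext i
    simp only [Set.mem_setOf_eq]
    rw [key v hvu]
  unfold DepU
  congr 1
  ext r
  constructor <;> rintro ⟨v, hv, hvu, rfl⟩
  · exact ⟨v, hv, hvu, by rw [hsc v hvu]⟩
  · exact ⟨v, hv, hvu, by rw [hsc v hvu]⟩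

lemma maxDepth_eq_gU (X : Fin n → E d) (hA : IsAu u A) :
    maxDepth (fun i => proj A (X i)) = gU X u := by
  unfold maxDepth gU
  congr 1
  ext r
  constructor
  · rintro ⟨x, rfl⟩
    exact ⟨embed A x, depth_proj_eq X hA x⟩
  · rintro ⟨y, rfl⟩
    exact ⟨proj A y, by rw [depth_proj_eq X hA, ← DepU_proj_y X hA]⟩

lemma lambda0_eq_inf_gU (X : Fin n → E d) :
    lambda0 X = sInf {r : ℝ | ∃ u : E d, ‖u‖ = 1 ∧ r = gU X u} := by
  unfold lambda0
  congr 1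
  ext r
  constructor
  · rintro ⟨u, A, hA, rfl⟩
    exact ⟨u, hA.1, maxDepth_eq_gU X hA⟩
  · rintro ⟨u, hu, rfl⟩
    obtain ⟨A, hA⟩ := exists_Au hu
    exact ⟨u, A, hA, (maxDepth_eq_gU X hA).symm⟩

/-- The defining set for `DepU`. -/
def depSetU (X : Fin n → E d) (u y : E d) : Set ℝ :=
  {r : ℝ | ∃ v : E d, ‖v‖ = 1 ∧ ⟪v, u⟫ = 0 ∧ r = (sideCount X v y : ℝ) / (n : ℝ)}

lemma DepU_eq (X : Fin n → E d) (u y : E d) : DepU X u y = sInf (depSetU X u y) := rfl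

lemma depSetU_sub_valSet (X : Fin n → E d) (u y : E d) : depSetU X u y ⊆ valSet n := by
  rintro r ⟨v, -, -, rfl⟩
  exact ⟨_, sideCount_le X v y, rfl⟩

lemma exists_unit_perp (hd : 2 ≤ d) {u : E d} (hu : ‖u‖ = 1) :
    ∃ v : E d, ‖v‖ = 1 ∧ ⟪v, u⟫ = 0 := by
  obtain ⟨A, hA⟩ := exists_Au hu
  exact ⟨A ⟨0, by omega⟩, hA.2.1.1 _, hA.2.2 _⟩

lemma depSetU_nonempty (hd : 2 ≤ d) (X : Fin n → E d) {u : E d} (hu : ‖u‖ = 1) (y : E d) :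
    (depSetU X u y).Nonempty := by
  obtain ⟨v, hv, hvu⟩ := exists_unit_perp hd hu
  exact ⟨_, v, hv, hvu, rfl⟩

lemma DepU_mem (hd : 2 ≤ d) (X : Fin n → E d) {u : E d} (hu : ‖u‖ = 1) (y : E d) :
    DepU X u y ∈ depSetU X u y :=
  Set.Nonempty.csInf_mem (depSetU_nonempty hd X hu y)
    ((valSet_finite n).subset (depSetU_sub_valSet X u y))

lemma DepU_le (X : Fin n → E d) {u y : E d} {r : ℝ} (hr : r ∈ depSetU X u y) :
    DepU X u y ≤ r :=
  csInf_le ((valSet_finite n).subset (depSetU_sub_valSet X u y)).bddBelow hr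

lemma DepU_nonneg (hd : 2 ≤ d) (X : Fin n → E d) {u : E d} (hu : ‖u‖ = 1) (y : E d) :
    0 ≤ DepU X u y :=
  le_csInf (depSetU_nonempty hd X hu y)
    (fun _ hr => valSet_nonneg (depSetU_sub_valSet X u y hr))

lemma gU_set_sub_valSet (hd : 2 ≤ d) (X : Fin n → E d) {u : E d} (hu : ‖u‖ = 1) :
    {r : ℝ | ∃ y : E d, r = DepU X u y} ⊆ valSet n := by
  rintro r ⟨y, rfl⟩
  exact depSetU_sub_valSet X u y (DepU_mem hd X hu y)

lemma gU_mem (hd : 2 ≤ d) (X : Fin n → E d) {u : E d} (hu : ‖u‖ = 1) :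
    gU X u ∈ {r : ℝ | ∃ y : E d, r = DepU X u y} :=
  Set.Nonempty.csSup_mem ⟨_, 0, rfl⟩ ((valSet_finite n).subset (gU_set_sub_valSet hd X hu))

lemma DepU_le_gU (hd : 2 ≤ d) (X : Fin n → E d) {u : E d} (hu : ‖u‖ = 1) (y : E d) :
    DepU X u y ≤ gU X u :=
  le_csSup ((valSet_finite n).subset (gU_set_sub_valSet hd X hu)).bddAbove ⟨y, rfl⟩

lemma gU_nonneg (hd : 2 ≤ d) (X : Fin n → E d) {u : E d} (hu : ‖u‖ = 1) :
    0 ≤ gU X u :=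
  le_trans (DepU_nonneg hd X hu 0) (DepU_le_gU hd X hu 0)

lemma unit_normal_eq {v v' : E d} (hv : ‖v‖ = 1) (hv' : ‖v'‖ = 1) {c c' : ℝ}
    (h : {x : E d | ⟪v, x⟫ = c} = {x : E d | ⟪v', x⟫ = c'}) : v' = v ∨ v' = -v := by
  have hm : ∀ x : E d, ⟪v, x⟫ = c ↔ ⟪v', x⟫ = c' := fun x => Set.ext_iff.mp h x
  have h0 : ⟪v', c • v⟫ = c' := by
    refine (hm _).mp ?_
    rw [real_inner_smul_right, real_inner_self_eq_norm_sq, hv]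
    ring
  have hw : ∀ w : E d, ⟪v, w⟫ = 0 → ⟪v', w⟫ = 0 := by
    intro w hw0
    have h1 : ⟪v', c • v + w⟫ = c' := by
      refine (hm _).mp ?_
      rw [inner_add_right, real_inner_smul_right, real_inner_self_eq_norm_sq, hv, hw0]
      ring
    rw [inner_add_right, h0] at h1
    linarith
  have h2 : ⟪v', v' - ⟪v, v'⟫ • v⟫ = 0 := by
    refine hw _ ?_
    rw [inner_sub_right, real_inner_smul_right, real_inner_self_eq_norm_sq, hv]
    ring
  rw [inner_sub_right, real_inner_smul_right, real_inner_self_eq_norm_sq, hv'] at h2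
  have h3 : ⟪v, v'⟫ * ⟪v', v⟫ = 1 := by linarith
  rw [real_inner_comm v' v] at h3
  have h4 : (⟪v, v'⟫ - 1) * (⟪v, v'⟫ + 1) = 0 := by nlinarith
  rcases mul_eq_zero.mp h4 with h5 | h5
  · left
    have h6 : ⟪v' - v, v' - v⟫ = (0 : ℝ) := by
      rw [inner_sub_sub_self, real_inner_self_eq_norm_sq, real_inner_self_eq_norm_sq, hv, hv',
        real_inner_comm v' v]
      nlinarith
    have := inner_self_eq_zero.mp h6
    rwa [sub_eq_zero] at this
  · right
    have h6 : ⟪v' + v, v' + v⟫ = (0 : ℝ) := by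
      rw [inner_add_add_self, real_inner_self_eq_norm_sq, real_inner_self_eq_norm_sq, hv, hv',
        real_inner_comm v' v]
      nlinarith
    have := inner_self_eq_zero.mp h6
    rw [add_eq_zero_iff_eq_neg] at this
    exact this

lemma normal_set_finite (X : Fin n → E d) :
    {v : E d | normalToSampleHyperplane X v}.Finite := by
  have key : ∀ s : Finset (Fin n),
      {v : E d | ‖v‖ = 1 ∧ ∃ c : ℝ,
        (affineSpan ℝ (X '' (s : Set (Fin n))) : Set (E d)) = {x : E d | ⟪v, x⟫ = c}}.Finite := by
    intro s
    set T := {v : E d | ‖v‖ = 1 ∧ ∃ c : ℝ,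
      (affineSpan ℝ (X '' (s : Set (Fin n))) : Set (E d)) = {x : E d | ⟪v, x⟫ = c}} with hT
    rcases T.eq_empty_or_nonempty with h | ⟨v₀, hv₀⟩
    · rw [h]; exact Set.finite_empty
    · refine Set.Finite.subset ((Set.finite_singleton (-v₀)).insert v₀) ?_
      rintro v ⟨hv1, c, hc⟩
      obtain ⟨hv₀1, c₀, hc₀⟩ := hv₀
      have := unit_normal_eq hv₀1 hv1 (hc₀ ▸ hc ▸ rfl : {x : E d | ⟪v₀, x⟫ = c₀} = {x : E d | ⟪v, x⟫ = c})
      rcases this with h | h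
      · exact Set.mem_insert_iff.mpr (Or.inl h)
      · exact Set.mem_insert_iff.mpr (Or.inr (by simp [h]))
  have hsub : {v : E d | normalToSampleHyperplane X v} ⊆
      ⋃ s : Finset (Fin n), {v : E d | ‖v‖ = 1 ∧ ∃ c : ℝ,
        (affineSpan ℝ (X '' (s : Set (Fin n))) : Set (E d)) = {x : E d | ⟪v, x⟫ = c}} := by
    rintro v ⟨hv, s, c, _, hsp⟩
    exact Set.mem_iUnion.mpr ⟨s, hv, c, hsp⟩
  exact Set.Finite.subset (Set.finite_iUnion key) hsub

/-- Perturb a unit vector within `δ` to avoid orthogonality with finitely many nonzero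
vectors. -/
lemma exists_avoid_finset (F : Finset (E d)) :
    ∀ u : E d, ‖u‖ = 1 → ∀ δ : ℝ, 0 < δ → (∀ v ∈ F, v ≠ 0) →
      ∃ u₀ : E d, ‖u₀‖ = 1 ∧ ‖u₀ - u‖ < δ ∧ ∀ v ∈ F, ⟪u₀, v⟫ ≠ 0 := by
  classical
  induction F using Finset.induction_on with
  | empty => exact fun u hu δ hδ _ => ⟨u, hu, by simpa using hδ, by simp⟩
  | @insert v₀ N hv₀N IH =>
    intro u hu δ hδ hN0
    have hNfin : (N : Set (E d)).Finite := N.finite_toSet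
    have hN0' : ∀ v ∈ N, v ≠ 0 := fun v hv => hN0 v (Finset.mem_insert_of_mem hv)
    obtain ⟨u₁, hu₁, hu₁u, hu₁N⟩ := IH u hu (δ / 2) (by linarith) hN0'
    have hv₀ : v₀ ≠ 0 := hN0 v₀ (Finset.mem_insert_self _ _)
    by_cases hcase : ⟪u₁, v₀⟫ ≠ 0
    · exact ⟨u₁, hu₁, by linarith, fun v hv => (Finset.mem_insert.mp hv).elim
        (fun h => h ▸ hcase) (fun h => hu₁N v h)⟩
    push_neg at hcase
    -- perturb u₁ in direction v₀
    set f : ℝ → E d := fun ε => ‖u₁ + ε • v₀‖⁻¹ • (u₁ + ε • v₀) with hf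
    have hwlim : Filter.Tendsto (fun ε : ℝ => u₁ + ε • v₀) (nhds 0) (nhds u₁) := by
      have : Filter.Tendsto (fun ε : ℝ => ε • v₀) (nhds 0) (nhds ((0 : ℝ) • v₀)) :=
        (Filter.tendsto_id.smul tendsto_const_nhds)
      simpa using tendsto_const_nhds.add this
    have hnlim : Filter.Tendsto (fun ε : ℝ => ‖u₁ + ε • v₀‖) (nhds 0) (nhds 1) := by
      have := hwlim.norm
      rwa [hu₁] at this
    have hflim : Filter.Tendsto f (nhds 0) (nhds u₁) := by
      have h := (hnlim.inv₀ one_ne_zero).smul hwlim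
      rw [hf]
      simpa only [inv_one, one_smul] using h
    have hnne : ∀ᶠ ε : ℝ in nhds 0, ‖u₁ + ε • v₀‖ ≠ 0 := hnlim.eventually_ne one_ne_zero
    have hnear : ∀ᶠ ε : ℝ in nhds 0, ‖f ε - u₁‖ < δ / 2 := by
      have h1 : Filter.Tendsto (fun ε => ‖f ε - u₁‖) (nhds 0) (nhds 0) := by
        have := (hflim.sub (tendsto_const_nhds (x := u₁))).norm
        simpa using this
      exact h1.eventually (eventually_lt_nhds (by linarith))
    have havoidN : ∀ᶠ ε : ℝ in nhds 0, ∀ v ∈ N, ⟪f ε, v⟫ ≠ 0 := by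
      rw [Filter.eventually_all_finset]
      intro v hv
      have : Filter.Tendsto (fun ε => ⟪f ε, v⟫) (nhds 0) (nhds ⟪u₁, v⟫) :=
        hflim.inner tendsto_const_nhds
      exact this.eventually_ne (hu₁N v hv)
    have hcomb := (hnne.and (hnear.and havoidN)).filter_mono
      (nhdsWithin_le_nhds (s := {(0:ℝ)}ᶜ))
    obtain ⟨ε, ⟨hεn, hεnear, hεN⟩, hε0⟩ :=
      (hcomb.and (eventually_mem_nhdsWithin (s := {(0:ℝ)}ᶜ))).exists
    rw [Set.mem_compl_iff, Set.mem_singleton_iff] at hε0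
    refine ⟨f ε, ?_, ?_, ?_⟩
    · rw [hf]
      simp only [norm_smul, norm_inv, norm_norm]
      exact inv_mul_cancel₀ hεn
    · calc ‖f ε - u‖ ≤ ‖f ε - u₁‖ + ‖u₁ - u‖ := norm_sub_le_norm_sub_add_norm_sub _ _ _
        _ < δ / 2 + δ / 2 := add_lt_add hεnear hu₁u
        _ = δ := by ring
    · intro v hv
      rcases Finset.mem_insert.mp hv with h | h
      · subst h
        rw [hf]
        simp only [real_inner_smul_left]
        rw [inner_add_left, hcase, real_inner_smul_left, real_inner_self_eq_norm_sq]
        have : ‖v‖ ≠ 0 := norm_ne_zero_iff.mpr hv₀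
        intro hcon
        have h2 : ε * ‖v‖ ^ 2 ≠ 0 := by positivity
        rcases mul_eq_zero.mp hcon with h3 | h3
        · exact hεn (by simpa using h3)
        · exact h2 (by linarith)
      · rw [hf]
        exact hεN v h

lemma exists_avoid {N : Set (E d)} (hN : N.Finite) (hN0 : ∀ v ∈ N, v ≠ 0)
    {u : E d} (hu : ‖u‖ = 1) {δ : ℝ} (hδ : 0 < δ) :
    ∃ u₀ : E d, ‖u₀‖ = 1 ∧ ‖u₀ - u‖ < δ ∧ ∀ v ∈ N, ⟪u₀, v⟫ ≠ 0 := by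
  classical
  obtain ⟨u₀, h1, h2, h3⟩ := exists_avoid_finset hN.toFinset u hu δ hδ
    (fun v hv => hN0 v (hN.mem_toFinset.mp hv))
  exact ⟨u₀, h1, h2, fun v hv => h3 v (hN.mem_toFinset.mpr hv)⟩

lemma DepU_congr_point (X : Fin n → E d) {u y z : E d}
    (h : ∀ v : E d, ⟪v, u⟫ = 0 → ⟪v, y⟫ = ⟪v, z⟫) : DepU X u y = DepU X u z := by
  have hsc : ∀ v : E d, ⟪v, u⟫ = 0 → sideCount X v y = sideCount X v z := by
    intro v hv
    unfold sideCount
    congr 1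
    ext i
    simp only [Set.mem_setOf_eq]
    rw [h v hv]
  unfold DepU
  congr 1
  ext r
  constructor <;> rintro ⟨v, hv, hvu, rfl⟩
  · exact ⟨v, hv, hvu, by rw [hsc v hvu]⟩
  · exact ⟨v, hv, hvu, by rw [hsc v hvu]⟩

lemma gU_zero (hd : 2 ≤ d) (hn : n = 0) (X : Fin n → E d) {u : E d} (hu : ‖u‖ = 1) :
    gU X u = 0 := by
  subst hn
  have hdep : ∀ y : E d, DepU X u y = 0 := by
    intro y
    refine le_antisymm ?_ (DepU_nonneg hd X hu y)
    obtain ⟨v, hv, hvu⟩ := exists_unit_perp hd hu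
    exact DepU_le X ⟨v, hv, hvu, by simp⟩
  have hset : {r : ℝ | ∃ y : E d, r = DepU X u y} = {0} := by
    ext r
    simp only [Set.mem_setOf_eq, Set.mem_singleton_iff]
    exact ⟨fun ⟨y, hy⟩ => hy.trans (hdep y), fun h => ⟨0, h.trans (hdep 0).symm⟩⟩
  unfold gU
  rw [hset, csSup_singleton]

lemma gU_usc (hd : 2 ≤ d) (X : Fin n → E d) {u : E d} (hu : ‖u‖ = 1) :
    ∃ δ : ℝ, 0 < δ ∧ ∀ u' : E d, ‖u'‖ = 1 → ‖u' - u‖ < δ → gU X u' ≤ gU X u := by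
  rcases Nat.eq_zero_or_pos n with hn | hn
  · exact ⟨1, one_pos, fun u' hu' _ => by rw [gU_zero hd hn X hu', gU_zero hd hn X hu]⟩
  by_contra hcon
  push_neg at hcon
  have hseq : ∀ m : ℕ, ∃ u' : E d, ‖u'‖ = 1 ∧ ‖u' - u‖ < 1 / ((m : ℝ) + 1) ∧
      gU X u < gU X u' := by
    intro m
    exact hcon (1 / ((m : ℝ) + 1)) (by positivity)
  choose U hU1 hU2 hU3 using hseq
  set lam := gU X u with hlam
  have hlam0 : 0 ≤ lam := gU_nonneg hd X hu
  have hY : ∀ m : ℕ, ∃ y : E d, lam < DepU X (U m) y := by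
    intro m
    obtain ⟨y, hy⟩ := gU_mem hd X (hU1 m)
    exact ⟨y, hy ▸ hU3 m⟩
  choose Y hYlt using hY
  set Z : ℕ → E d := fun m => Y m - ⟪U m, Y m⟫ • U m with hZdef
  have hZperp : ∀ m : ℕ, ∀ v : E d, ⟪v, U m⟫ = 0 → ⟪v, Y m⟫ = ⟪v, Z m⟫ := by
    intro m v hv
    rw [hZdef]
    simp only [inner_sub_right, real_inner_smul_right]
    rw [hv, mul_zero, sub_zero]
  have hZdep : ∀ m : ℕ, lam < DepU X (U m) (Z m) := by
    intro m
    rw [← DepU_congr_point X (hZperp m)]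
    exact hYlt m
  set R : ℝ := ∑ i, ‖X i‖ with hR
  have hXR : ∀ i, ‖X i‖ ≤ R :=
    fun i => Finset.single_le_sum (fun j _ => norm_nonneg (X j)) (Finset.mem_univ i)
  have hR0 : 0 ≤ R := Finset.sum_nonneg fun j _ => norm_nonneg _
  have hZUperp : ∀ m : ℕ, ⟪Z m, U m⟫ = 0 := by
    intro m
    rw [hZdef]
    simp only [inner_sub_left, real_inner_smul_left]
    rw [real_inner_self_eq_norm_sq, hU1 m, real_inner_comm (Y m) (U m)]
    ring
  have hZR : ∀ m : ℕ, ‖Z m‖ ≤ R := by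
    intro m
    by_contra hbig
    push_neg at hbig
    have hZ0 : Z m ≠ 0 := by
      intro h
      rw [h, norm_zero] at hbig
      linarith
    set v₀ : E d := -(‖Z m‖⁻¹ • Z m) with hv₀
    have hZnorm0 : ‖Z m‖ ≠ 0 := norm_ne_zero_iff.mpr hZ0
    have hv₀n : ‖v₀‖ = 1 := by
      rw [hv₀, norm_neg, norm_smul, norm_inv, norm_norm]
      exact inv_mul_cancel₀ hZnorm0
    have hv₀u : ⟪v₀, U m⟫ = 0 := by
      rw [hv₀, inner_neg_left, real_inner_smul_left, hZUperp m, mul_zero, neg_zero]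
    have hcnt : sideCount X v₀ (Z m) = 0 := by
      unfold sideCount
      convert Set.ncard_empty (Fin n)
      rw [Set.eq_empty_iff_forall_notMem]
      intro i hi
      simp only [Set.mem_setOf_eq] at hi
      have h1 : ⟪v₀, Z m⟫ = -‖Z m‖ := by
        rw [hv₀, inner_neg_left, real_inner_smul_left, real_inner_self_eq_norm_sq]
        field_simp
      have h2 : -‖X i‖ ≤ ⟪v₀, X i⟫ := by
        have h3 := abs_real_inner_le_norm v₀ (X i)
        rw [hv₀n, one_mul] at h3
        linarith [neg_abs_le (⟪v₀, X i⟫ : ℝ)]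
      rw [h1] at hi
      have := hXR i
      linarith
    have hdle : DepU X (U m) (Z m) ≤ 0 :=
      DepU_le X ⟨v₀, hv₀n, hv₀u, by rw [hcnt]; simp⟩
    linarith [hZdep m]
  have hZball : ∀ m : ℕ, Z m ∈ Metric.closedBall (0 : E d) R := by
    intro m
    rw [Metric.mem_closedBall, dist_zero_right]
    exact hZR m
  obtain ⟨ystar, -, φ, hφ, hZlim⟩ :=
    (isCompact_closedBall (0 : E d) R).tendsto_subseq hZball
  have hUlim : Filter.Tendsto (fun m => U (φ m)) Filter.atTop (nhds u) := by
    rw [tendsto_iff_dist_tendsto_zero]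
    refine squeeze_zero (fun m => dist_nonneg) (fun m => ?_)
      tendsto_one_div_add_atTop_nhds_zero_nat
    rw [dist_eq_norm]
    refine le_trans (le_of_lt (hU2 (φ m))) ?_
    have h2 : (m : ℝ) ≤ (φ m : ℝ) := Nat.cast_le.mpr hφ.le_apply
    exact one_div_le_one_div_of_le (by positivity) (by linarith)
  obtain ⟨v, hv1, hvu, hveq⟩ := DepU_mem hd X hu ystar
  have hclam : ((sideCount X v ystar : ℝ)) / n ≤ lam := hveq ▸ DepU_le_gU hd X hu ystar
  set W : ℕ → E d := fun m => v - ⟪v, U (φ m)⟫ • U (φ m) with hW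
  have hinlim : Filter.Tendsto (fun m => ⟪v, U (φ m)⟫) Filter.atTop (nhds (0 : ℝ)) := by
    have := Filter.Tendsto.inner (𝕜 := ℝ) (tendsto_const_nhds (x := v)) hUlim
    rwa [hvu] at this
  have hWlim : Filter.Tendsto W Filter.atTop (nhds v) := by
    have h1 := Filter.Tendsto.smul hinlim hUlim
    have h2 := Filter.Tendsto.sub (tendsto_const_nhds (x := v)) h1
    rw [hW]
    simpa using h2
  have hWnorm : Filter.Tendsto (fun m => ‖W m‖) Filter.atTop (nhds 1) := by
    have := hWlim.norm
    rwa [hv1] at this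
  set V : ℕ → E d := fun m => ‖W m‖⁻¹ • W m with hV
  have hVlim : Filter.Tendsto V Filter.atTop (nhds v) := by
    have := (hWnorm.inv₀ one_ne_zero).smul hWlim
    rw [hV]
    simpa using this
  have hWne : ∀ᶠ m in Filter.atTop, ‖W m‖ ≠ 0 := hWnorm.eventually_ne one_ne_zero
  have hWperp : ∀ m : ℕ, ⟪W m, U (φ m)⟫ = 0 := by
    intro m
    rw [hW]
    simp only [inner_sub_left, real_inner_smul_left]
    rw [real_inner_self_eq_norm_sq, hU1 (φ m)]
    ring
  set T := {i : Fin n | ⟪v, X i⟫ ≤ ⟪v, ystar⟫} with hTdef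
  have hstrict : ∀ᶠ m in Filter.atTop, ∀ i ∈ (Finset.univ : Finset (Fin n)),
      (i ∉ T → ⟪V m, Z (φ m)⟫ < ⟪V m, X i⟫) := by
    rw [Filter.eventually_all_finset]
    intro i _
    by_cases hiT : i ∈ T
    · filter_upwards with m hmem
      exact absurd hiT hmem
    · have hpos : ⟪v, ystar⟫ < ⟪v, X i⟫ := by
        rw [hTdef] at hiT
        simpa using lt_of_not_ge (by simpa using hiT)
      have hl1 : Filter.Tendsto (fun m => ⟪V m, Z (φ m)⟫) Filter.atTop
          (nhds ⟪v, ystar⟫) := Filter.Tendsto.inner hVlim hZlim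
      have hl2 : Filter.Tendsto (fun m => ⟪V m, X i⟫) Filter.atTop
          (nhds ⟪v, X i⟫) := Filter.Tendsto.inner hVlim tendsto_const_nhds
      have h3 : Filter.Tendsto (fun m => ⟪V m, X i⟫ - ⟪V m, Z (φ m)⟫) Filter.atTop
          (nhds (⟪v, X i⟫ - ⟪v, ystar⟫)) := hl2.sub hl1
      have h4 := h3.eventually (eventually_gt_nhds (show (0:ℝ) < ⟪v, X i⟫ - ⟪v, ystar⟫ by linarith))
      filter_upwards [h4] with m hm _
      linarith
  obtain ⟨m, hm1, hm2⟩ := (hWne.and hstrict).exists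
  have hVn : ‖V m‖ = 1 := by
    rw [hV]
    simp only [norm_smul, norm_inv, norm_norm]
    exact inv_mul_cancel₀ hm1
  have hVu : ⟪V m, U (φ m)⟫ = 0 := by
    rw [hV]
    simp only [real_inner_smul_left]
    rw [hWperp m, mul_zero]
  have hmemd : ((sideCount X (V m) (Z (φ m)) : ℝ)) / n ∈ depSetU X (U (φ m)) (Z (φ m)) :=
    ⟨V m, hVn, hVu, rfl⟩
  have hgt : lam < ((sideCount X (V m) (Z (φ m)) : ℝ)) / n :=
    lt_of_lt_of_le (hZdep (φ m)) (DepU_le X hmemd)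
  have hnpos : (0 : ℝ) < n := by exact_mod_cast hn
  have hcnat : sideCount X v ystar < sideCount X (V m) (Z (φ m)) := by
    have h5 : ((sideCount X v ystar : ℝ)) / n < ((sideCount X (V m) (Z (φ m)) : ℝ)) / n :=
      lt_of_le_of_lt hclam hgt
    have h6 := (div_lt_div_iff_of_pos_right hnpos).mp h5
    exact_mod_cast h6
  have hsub : {i : Fin n | ⟪V m, X i⟫ ≤ ⟪V m, Z (φ m)⟫} ⊆ T := by
    intro i hi
    by_contra hiT
    simp only [Set.mem_setOf_eq] at hi
    exact absurd hi (not_le.mpr (hm2 i (Finset.mem_univ i) hiT))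
  have hle : sideCount X (V m) (Z (φ m)) ≤ sideCount X v ystar := by
    have h1 := Set.ncard_le_ncard hsub (Set.toFinite T)
    unfold sideCount
    exact h1
  omega

end Aux

/-- **Lemma 4.** There is a unit vector `u₀` satisfying condition (2.1) at
which the infimum over all directions of the maximum Tukey depth of the projected sample is
attained: `λ*(X_{u₀}^n) = inf_{u ∈ S^{d-1}} λ*(X_u^n)`. -/
theorem lemma4 {d n : ℕ} (hd : 2 ≤ d) (X : Fin n → E d)
    (hX : inGeneralPosition X) :
    ∃ (u₀ : E d) (A₀ : Fin (d - 1) → E d), IsAu u₀ A₀ ∧ cond21 X u₀ ∧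
      maxDepth (fun i => proj A₀ (X i)) = lambda0 X := by
  classical
  set G := {r : ℝ | ∃ u : E d, ‖u‖ = 1 ∧ r = gU X u} with hG
  have hGsub : G ⊆ valSet n := by
    rintro r ⟨u, hu, rfl⟩
    exact gU_set_sub_valSet hd X hu (gU_mem hd X hu)
  have hGfin : G.Finite := (valSet_finite n).subset hGsub
  have hGne : G.Nonempty := by
    refine ⟨gU X (EuclideanSpace.single (⟨0, by omega⟩ : Fin d) (1 : ℝ)),
      EuclideanSpace.single (⟨0, by omega⟩ : Fin d) (1 : ℝ), ?_, rfl⟩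
    rw [EuclideanSpace.norm_single]
    norm_num
  obtain ⟨ustar, hustar, hstareq⟩ := Set.Nonempty.csInf_mem hGne hGfin
  obtain ⟨δ, hδ, husc⟩ := gU_usc hd X hustar
  obtain ⟨u₀, hu₀, hnear, havoid⟩ := exists_avoid (normal_set_finite X)
    (fun v hv => by
      have h1 : ‖v‖ = 1 := hv.1
      intro h0
      rw [h0, norm_zero] at h1
      norm_num at h1) hustar hδ
  obtain ⟨A₀, hA₀⟩ := exists_Au hu₀
  refine ⟨u₀, A₀, hA₀, fun v hv => havoid v hv, ?_⟩
  rw [maxDepth_eq_gU X hA₀, lambda0_eq_inf_gU X, ← hG]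
  have h2 : sInf G ≤ gU X u₀ := csInf_le hGfin.bddBelow ⟨u₀, hu₀, rfl⟩
  have h1 : gU X u₀ ≤ sInf G := hstareq ▸ husc u₀ hu₀ hnear
  exact le_antisymm h1 h2
end
end
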